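/- If the stochastic payoffs are GEV with generating functions g^X, g^Y (homogeneous of degree 1) and the market-clearing condition n^X p^X_{xy} = n^Y p^Y_{xy} holds, then the equilibrium wage satisfies w*_{xy} = (σ^Xσ^Y/(σ^X+σ^Y)) [ log n^Y + β^Y_{xy}/σ^Y + log ∂_{e^Y_{xy}} g^Y(e^Y) - log g^Y(e^Y) - log n^X - β^X_{xy}/σ^X - log ∂_{e^X_{xy}} g^X(e^X) + log g^X(e^X) ], where e^X_{xj} = exp((β^X_{xj}+w*_{xj})/σ^X) and e^Y_{iy} = exp((β^Y_{iy}-w*_{iy})/σ^Y). -/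
import Mathlib


open Real Finset

/-- In the GEV matching model with degree-1 homogeneous generating functions
`g^X_x` (for worker types) and `g^Y_y` (for firm types), market clearing
`n^X_x p^X_{xy} = n^Y_y p^Y_{xy}` implies the equilibrium wage equation
`w*_{xy} = (σ^Xσ^Y/(σ^X+σ^Y)) [log n^Y_y + β^Y_{xy}/σ^Y + log ∂g^Y - log g^Y
  - log n^X_x - β^X_{xy}/σ^X - log ∂g^X + log g^X]`,
where the worker's exponentiated scaled payoff vector is
`e^X_{x·} = (1, exp((β^X_{xj}+w_{xj})/σ^X))_j` (outside option at index 0) and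
the firm's is `e^Y_{·y} = (1, exp((β^Y_{iy}-w_{iy})/σ^Y))_i`. -/
theorem gev_equilibrium_wage_equation {n m : ℕ}
    (gX : Fin n → (Fin (m + 1) → ℝ) → ℝ) (gY : Fin m → (Fin (n + 1) → ℝ) → ℝ)
    (hhomX : ∀ x (c : ℝ), 0 < c → ∀ e, gX x (c • e) = c * gX x e)
    (hhomY : ∀ y (c : ℝ), 0 < c → ∀ e, gY y (c • e) = c * gY y e)
    (βX βY : Fin n → Fin m → ℝ) (σX σY : ℝ) (hσX : 0 < σX) (hσY : 0 < σY)
    (nX : Fin n → ℝ) (nY : Fin m → ℝ) (hnX : ∀ x, 0 < nX x) (hnY : ∀ y, 0 < nY y)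
    (W : Fin n → Fin m → ℝ)
    -- exponentiated scaled payoffs, outside option (index 0) normalized to 1
    (eX : Fin n → Fin (m + 1) → ℝ) (eY : Fin m → Fin (n + 1) → ℝ)
    (heX : ∀ x, eX x = Fin.cons 1 (fun j => Real.exp ((βX x j + W x j) / σX)))
    (heY : ∀ y, eY y = Fin.cons 1 (fun i => Real.exp ((βY i y - W i y) / σY)))
    (hgXpos : ∀ x, 0 < gX x (eX x)) (hgYpos : ∀ y, 0 < gY y (eY y))
    (hdXpos : ∀ x (y : Fin m), 0 < fderiv ℝ (gX x) (eX x) (Pi.single y.succ 1))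
    (hdYpos : ∀ y (x : Fin n), 0 < fderiv ℝ (gY y) (eY y) (Pi.single x.succ 1))
    -- market clearing for the GEV choice probabilities
    (hmc : ∀ x y,
      nX x * (eX x y.succ * fderiv ℝ (gX x) (eX x) (Pi.single y.succ 1) / gX x (eX x))
        = nY y * (eY y x.succ * fderiv ℝ (gY y) (eY y) (Pi.single x.succ 1) / gY y (eY y))) :
    ∀ x y, W x y = σX * σY / (σX + σY) *
      (Real.log (nY y) + βY x y / σY
        + Real.log (fderiv ℝ (gY y) (eY y) (Pi.single x.succ 1))
        - Real.log (gY y (eY y))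
        - Real.log (nX x) - βX x y / σX
        - Real.log (fderiv ℝ (gX x) (eX x) (Pi.single y.succ 1))
        + Real.log (gX x (eX x))) := by
  intro x y
  have heXv : eX x y.succ = Real.exp ((βX x y + W x y) / σX) := by
    rw [heX x]; simp
  have heYv : eY y x.succ = Real.exp ((βY x y - W x y) / σY) := by
    rw [heY y]; simp
  have heXp : 0 < eX x y.succ := heXv ▸ Real.exp_pos _
  have heYp : 0 < eY y x.succ := heYv ▸ Real.exp_pos _
  have key := congrArg Real.log (hmc x y)
  rw [Real.log_mul (hnX x).ne' (div_pos (mul_pos heXp (hdXpos x y)) (hgXpos x)).ne',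
    Real.log_mul (hnY y).ne' (div_pos (mul_pos heYp (hdYpos y x)) (hgYpos y)).ne',
    Real.log_div (mul_pos heXp (hdXpos x y)).ne' (hgXpos x).ne',
    Real.log_div (mul_pos heYp (hdYpos y x)).ne' (hgYpos y).ne',
    Real.log_mul heXp.ne' (hdXpos x y).ne', Real.log_mul heYp.ne' (hdYpos y x).ne',
    heXv, heYv, Real.log_exp, Real.log_exp] at key
  have hs : σX + σY ≠ 0 := by positivity
  field_simp at key ⊢
  ring_nf at key ⊢
  nlinarith [key, mul_pos hσX hσY]
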